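/- Let D be an n×n dissimilarity matrix. Then D is circular Robinson if and only if for every i ∈ [n] and every r > 0 the closed ball B_r(i) = {j ∈ [n] : D(i,j) ≤ r} is an arc of [n]. -/

import Mathlib

/-- The standard cyclic order on `Fin n`. -/
def CycOrd {n : ℕ} (i j k : Fin n) : Prop :=
  (i < j ∧ j < k) ∨ (j < k ∧ k < i) ∨ (k < i ∧ i < j)

/-- `i,j,k,l` are pairwise distinct and cyclically ordered. -/
def CycOrd4 {n : ℕ} (i j k l : Fin n) : Prop :=
  i ≠ j ∧ i ≠ k ∧ i ≠ l ∧ j ≠ k ∧ j ≠ l ∧ k ≠ l ∧ CycOrd i j k ∧ CycOrd i k l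

/-- `D` is a dissimilarity matrix. -/
def IsDissim {n : ℕ} (D : Fin n → Fin n → ℝ) : Prop :=
  (∀ i j, D i j = D j i) ∧ (∀ i j, 0 ≤ D i j) ∧ (∀ i, D i i = 0)

/-- `D` is a circular Robinson matrix. -/
def CircRobinson {n : ℕ} (D : Fin n → Fin n → ℝ) : Prop :=
  ∀ i j k l : Fin n, CycOrd4 i j k l → min (D j k) (D k l) ≤ D i k

open Fin.NatCast in
/-- The arc `{a, a+1, …, a+k}` (mod `n`) of `Fin n`. -/
def arcSet (n : ℕ) [NeZero n] (a : Fin n) (k : ℕ) : Set (Fin n) :=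
  {x | ∃ t : ℕ, t ≤ k ∧ x = a + (t : Fin n)}

/-- `A` is an arc of `Fin n`. -/
def IsArc (n : ℕ) [NeZero n] (A : Set (Fin n)) : Prop :=
  A.Nonempty ∧ ∃ (a : Fin n) (k : ℕ), k ≤ n - 1 ∧ A = arcSet n a k

open Fin.NatCast
variable {n : ℕ} [NeZero n]
theorem subval (x c : Fin n) : (x - c).val = (x.val + n - c.val) % n := by
  have h : (x - c).val = (n - c.val + x.val) % n := by rw [Fin.sub_def]
  rw [h]; congr 1; omega
theorem keymod (a x : ℕ) (ha : a < n) (hx : x < n) :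
    (x + n - a) % n = if a ≤ x then x - a else x + n - a := by
  split_ifs with h
  · have : x + n - a = (x - a) + n := by omega
    rw [this, Nat.add_mod_right, Nat.mod_eq_of_lt (by omega)]
  · exact Nat.mod_eq_of_lt (by omega)
theorem subvalcast (u v : ℕ) (hu : u < n) (hv : v < n) :
    ((u : Fin n) - (v : Fin n)).val = if v ≤ u then u - v else u + n - v := by
  rw [subval, Fin.val_natCast, Fin.val_natCast, Nat.mod_eq_of_lt hu, Nat.mod_eq_of_lt hv,
    keymod v u hv hu]
theorem cyc_iff (i j k : Fin n) :
    CycOrd i j k ↔ (0 < (j - i).val ∧ (j - i).val < (k - i).val) := by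
  simp only [CycOrd, Fin.lt_def, subval]
  have hi := i.is_lt; have hj := j.is_lt; have hk := k.is_lt
  rw [keymod i.val j.val hi hj, keymod i.val k.val hi hk]
  split_ifs <;> omega
variable {n : ℕ} [NeZero n]

theorem eq_iff_sub (x c : Fin n) : x = c ↔ (x - c).val = 0 := by
  rw [← sub_eq_zero (a := x) (b := c), Fin.ext_iff, Fin.val_zero]

theorem mem_arc_iff (a : Fin n) (K : ℕ) (x : Fin n) :
    x ∈ arcSet n a K ↔ (x - a).val ≤ K := by
  constructor
  · rintro ⟨t, ht, rfl⟩
    have h : a + (t : Fin n) - a = (t : Fin n) := by abel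
    rw [h, Fin.val_natCast]
    exact (Nat.mod_le t n).trans ht
  · intro h
    exact ⟨(x - a).val, h, by rw [Fin.cast_val_eq_self]; abel⟩
theorem dir2 (n : ℕ) [NeZero n] (D : Fin n → Fin n → ℝ) (hD : IsDissim D)
    (h : ∀ (i : Fin n) (r : ℝ), 0 < r → IsArc n {j | D i j ≤ r}) : CircRobinson D := by
  intro i j k l hc
  obtain ⟨hij, hik, hil, hjk, hjl, hkl, h1, h2⟩ := hc
  by_contra hlt
  push_neg at hlt
  set M := min (D j k) (D k l) with hM
  set r := (D i k + M) / 2 with hrdef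
  have hM1 : M ≤ D j k := min_le_left _ _
  have hM2 : M ≤ D k l := min_le_right _ _
  have h0 : 0 ≤ D i k := hD.2.1 i k
  have hr : 0 < r := by
    simp only [hrdef]; linarith
  obtain ⟨-, a, K, hK, hB⟩ := h k r hr
  have hiB : i ∈ arcSet n a K := by
    rw [← hB]; show D k i ≤ r
    rw [hD.1 k i]; simp only [hrdef]; linarith
  have hkB : k ∈ arcSet n a K := by
    rw [← hB]; show D k k ≤ r
    rw [hD.2.2 k]; linarith
  have hjB : j ∉ arcSet n a K := by
    rw [← hB]; show ¬ D k j ≤ r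
    rw [hD.1 k j]; simp only [hrdef]; push_neg; linarith
  have hlB : l ∉ arcSet n a K := by
    rw [← hB]; show ¬ D k l ≤ r
    simp only [hrdef]; push_neg; linarith
  rw [mem_arc_iff] at hiB hkB hjB hlB
  push_neg at hjB hlB
  set fi := (i - a).val with hfi
  set fj := (j - a).val with hfj
  set fk := (k - a).val with hfk
  set fl := (l - a).val with hfl
  have hfin : fi < n := (i - a).is_lt
  have hfjn : fj < n := (j - a).is_lt
  have hfkn : fk < n := (k - a).is_lt
  have hfln : fl < n := (l - a).is_lt
  have eji : j - i = (fj : Fin n) - (fi : Fin n) := by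
    rw [hfi, hfj, Fin.cast_val_eq_self, Fin.cast_val_eq_self]; abel
  have eki : k - i = (fk : Fin n) - (fi : Fin n) := by
    rw [hfi, hfk, Fin.cast_val_eq_self, Fin.cast_val_eq_self]; abel
  have eli : l - i = (fl : Fin n) - (fi : Fin n) := by
    rw [hfi, hfl, Fin.cast_val_eq_self, Fin.cast_val_eq_self]; abel
  rw [cyc_iff, eji, eki, subvalcast fj fi hfjn hfin, subvalcast fk fi hfkn hfin] at h1
  rw [cyc_iff, eki, eli, subvalcast fk fi hfkn hfin, subvalcast fl fi hfln hfin] at h2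
  split_ifs at h1 h2 <;> omega
theorem diffval {n : ℕ} [NeZero n] (i : Fin n) (s t : ℕ) (hs : s < n) (ht : t < n) :
    ((i + (s:Fin n)) - (i + (t:Fin n))).val = if t ≤ s then s - t else s + n - t := by
  have h : (i + (s:Fin n)) - (i + (t:Fin n)) = (s:Fin n) - (t:Fin n) := by abel
  rw [h, subvalcast s t hs ht]

theorem dir1 (n : ℕ) [NeZero n] (D : Fin n → Fin n → ℝ) (hD : IsDissim D)
    (hR : CircRobinson D) : ∀ (i : Fin n) (r : ℝ), 0 < r → IsArc n {j | D i j ≤ r} := by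
  classical
  intro i r hr
  have hn : 0 < n := Nat.pos_of_ne_zero (NeZero.ne n)
  have hiB : i ∈ {j | D i j ≤ r} := by
    show D i i ≤ r; rw [hD.2.2]; linarith
  by_cases hall : ∀ t : ℕ, t < n → D i (i + (t:Fin n)) ≤ r
  · refine ⟨⟨i, hiB⟩, i, n - 1, le_refl _, ?_⟩
    ext x
    rw [mem_arc_iff]
    constructor
    · intro _; have := (x - i).is_lt; omega
    · intro _
      show D i x ≤ r
      have hx : x = i + ((x - i).val : Fin n) := by rw [Fin.cast_val_eq_self]; abel
      rw [hx]; exact hall _ (x - i).is_lt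
  · push_neg at hall
    set u0 := Nat.find hall with hu0def
    obtain ⟨hu0n, hru0⟩ := Nat.find_spec hall
    rw [← hu0def] at hu0n hru0
    have hu0min : ∀ m, m < u0 → D i (i + (m:Fin n)) ≤ r := by
      intro m hm
      have h2 := Nat.find_min hall hm
      push_neg at h2
      exact h2 (by omega)
    have hu0pos : 0 < u0 := by
      rcases Nat.eq_zero_or_pos u0 with h0 | h
      · exfalso
        have : D i (i + ((0:ℕ):Fin n)) = 0 := by
          rw [Nat.cast_zero, add_zero, hD.2.2]
        rw [h0] at hru0
        rw [this] at hru0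
        linarith
      · exact h
    by_cases hV : ∃ t, u0 < t ∧ t < n ∧ D i (i + (t:Fin n)) ≤ r
    · set b := Nat.find hV with hbdef
      obtain ⟨hu0b, hbn, hSb⟩ := Nat.find_spec hV
      rw [← hbdef] at hu0b hbn hSb
      have hbmin : ∀ m, m < b → ¬(u0 < m ∧ m < n ∧ D i (i + (m:Fin n)) ≤ r) :=
        fun m hm => Nat.find_min hV hm
      have hgeb : ∀ w, b ≤ w → w < n → D i (i + (w:Fin n)) ≤ r := by
        intro w hbw hwn
        rcases eq_or_lt_of_le hbw with heq | hbw'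
        · rw [← heq]; exact hSb
        by_contra hSw
        push_neg at hSw
        have c4 : CycOrd4 (i + (b:Fin n)) (i + (w:Fin n)) (i + ((0:ℕ):Fin n))
            (i + (u0:Fin n)) := by
          refine ⟨?_, ?_, ?_, ?_, ?_, ?_, ?_, ?_⟩
          · rw [ne_eq, eq_iff_sub, diffval i b w hbn hwn]; split_ifs <;> omega
          · rw [ne_eq, eq_iff_sub, diffval i b 0 hbn hn]; split_ifs <;> omega
          · rw [ne_eq, eq_iff_sub, diffval i b u0 hbn hu0n]; split_ifs <;> omega
          · rw [ne_eq, eq_iff_sub, diffval i w 0 hwn hn]; split_ifs <;> omega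
          · rw [ne_eq, eq_iff_sub, diffval i w u0 hwn hu0n]; split_ifs <;> omega
          · rw [ne_eq, eq_iff_sub, diffval i 0 u0 hn hu0n]; split_ifs <;> omega
          · rw [cyc_iff, diffval i w b hwn hbn, diffval i 0 b hn hbn]
            split_ifs <;> omega
          · rw [cyc_iff, diffval i 0 b hn hbn, diffval i u0 b hu0n hbn]
            split_ifs <;> omega
        rw [show i + ((0:ℕ):Fin n) = i from by rw [Nat.cast_zero, add_zero]] at c4
        have hkey := hR _ _ _ _ c4
        rw [hD.1 (i + (w:Fin n)) i, hD.1 (i + (b:Fin n)) i] at hkey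
        have hmin : r < min (D i (i + (w:Fin n))) (D i (i + (u0:Fin n))) :=
          lt_min hSw hru0
        linarith [min_le_left (D i (i + (w:Fin n))) (D i (i + (u0:Fin n)))]
      refine ⟨⟨i, hiB⟩, i + (b:Fin n), n - 1 - b + u0, by omega, ?_⟩
      ext x
      rw [mem_arc_iff]
      have hdn : (x - i).val < n := (x - i).is_lt
      set d := (x - i).val with hd
      have hx : x = i + (d : Fin n) := by rw [hd, Fin.cast_val_eq_self]; abel
      have hsub : (x - (i + (b:Fin n))).val = if b ≤ d then d - b else d + n - b := by
        rw [show x - (i + (b:Fin n)) = (i + (d:Fin n)) - (i + (b:Fin n)) from by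
          rw [← hx], diffval i d b hdn hbn]
      rw [hsub]
      constructor
      · intro hxB
        simp only [Set.mem_setOf_eq] at hxB
        have hSd : D i (i + (d:Fin n)) ≤ r := by rw [← hx]; exact hxB
        have hcase : d < u0 ∨ b ≤ d := by
          by_contra hcon
          push_neg at hcon
          rcases eq_or_lt_of_le hcon.1 with heq | hlt'
          · rw [← heq] at hSd; linarith
          · exact hbmin d hcon.2 ⟨hlt', hdn, hSd⟩
        split_ifs with hbd <;> omega
      · intro hle
        show D i x ≤ r
        rw [hx]
        split_ifs at hle with hbd
        · exact hgeb d hbd hdn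
        · exact hu0min d (by omega)
    · push_neg at hV
      refine ⟨⟨i, hiB⟩, i, u0 - 1, by omega, ?_⟩
      ext x
      rw [mem_arc_iff]
      have hdn : (x - i).val < n := (x - i).is_lt
      set d := (x - i).val with hd
      have hx : x = i + (d : Fin n) := by rw [hd, Fin.cast_val_eq_self]; abel
      constructor
      · intro hxB
        simp only [Set.mem_setOf_eq] at hxB
        have hSd : D i (i + (d:Fin n)) ≤ r := by rw [← hx]; exact hxB
        have : d < u0 := by
          by_contra hc
          push_neg at hc
          rcases eq_or_lt_of_le hc with heq | hlt
          · rw [← heq] at hSd; linarith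
          · exact absurd hSd (not_le.mpr (hV d hlt hdn))
        omega
      · intro hle
        show D i x ≤ r
        rw [hx]
        exact hu0min d (by omega)

/-- A dissimilarity matrix is circular Robinson iff all its closed balls of
positive radius are arcs. -/
theorem statement4 (n : ℕ) [NeZero n] (D : Fin n → Fin n → ℝ) (hD : IsDissim D) :
    CircRobinson D ↔ ∀ (i : Fin n) (r : ℝ), 0 < r → IsArc n {j | D i j ≤ r} := by
  exact ⟨dir1 n D hD, dir2 n D hD⟩
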